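/- Let n ≥ 1, x_t, x_s, β ∈ ℝⁿ, α ∈ ℝ, z_t, z_s > 0, σ_t, σ_s > 0, ρ ∈ (−1, 1), and σ_{t,s} = ρσ_tσ_s. Let (U_t, U_s) have the bivariate normal distribution with means x_t'β + z_t·α and x_s'β + z_s·α, standard deviations σ_t and σ_s, and correlation ρ. Then E[(U_t²z_s²·U_s·z_t − U_s²z_t²·U_t·z_s − U_t z_s·U_s z_t·(x_t z_s − x_s z_t)'β + U_t z_s·(z_t²σ_s² − z_t z_s σ_{t,s}) − U_s z_t·(z_s²σ_t² − z_t z_s σ_{t,s}))·1{U_t>0, U_s>0}] = 0. -/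

import Mathlib

open MeasureTheory

/-- Density of the nondegenerate bivariate normal distribution with means `μ₁, μ₂`,
standard deviations `σ₁, σ₂ > 0` and correlation `ρ ∈ (−1, 1)`. -/
noncomputable def binormalPDF (μ₁ μ₂ σ₁ σ₂ ρ u₁ u₂ : ℝ) : ℝ :=
  (1 / (2 * Real.pi * σ₁ * σ₂ * Real.sqrt (1 - ρ ^ 2))) *
    Real.exp (-(1 / (2 * (1 - ρ ^ 2))) *
      ((u₁ - μ₁) ^ 2 / σ₁ ^ 2 - 2 * ρ * (u₁ - μ₁) * (u₂ - μ₂) / (σ₁ * σ₂)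
        + (u₂ - μ₂) ^ 2 / σ₂ ^ 2))

section TobitAux
open Real Filter Set


-- basic integrability of monomials against Gaussians
lemma aux_integrable_pow_gauss {b : ℝ} (hb : 0 < b) (m : ℕ) :
    Integrable (fun x : ℝ => x ^ m * Real.exp (-b * x ^ 2)) := by
  have h := integrable_rpow_mul_exp_neg_mul_sq hb
    (s := (m : ℝ)) (lt_of_lt_of_le neg_one_lt_zero (Nat.cast_nonneg m))
  simpa [Real.rpow_natCast] using h

lemma aux_integrable_abs_pow_gauss0 {b : ℝ} (hb : 0 < b) (m : ℕ) :
    Integrable (fun x : ℝ => |x| ^ m * Real.exp (-b * x ^ 2)) := by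
  have h := (aux_integrable_pow_gauss hb m).abs
  refine h.congr (Eventually.of_forall fun x => ?_)
  simp [abs_mul, abs_pow, abs_of_pos (Real.exp_pos _)]

lemma aux_gauss_moment {b : ℝ} (hb : 0 < b) (m : ℕ) (c : ℝ) :
    Integrable (fun x : ℝ => |x| ^ m * Real.exp (-b * (x - c) ^ 2)) := by
  have hsum : Integrable (fun u : ℝ =>
      ∑ k ∈ Finset.range (m + 1),
        |u| ^ k * |c| ^ (m - k) * (m.choose k : ℝ) * Real.exp (-b * u ^ 2)) := by
    apply integrable_finset_sum
    intro k _
    have h := (aux_integrable_abs_pow_gauss0 hb k).const_mul (|c| ^ (m - k) * (m.choose k : ℝ))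
    refine h.congr (Eventually.of_forall fun u => by ring)
  have h1 : Integrable (fun u : ℝ => |u + c| ^ m * Real.exp (-b * u ^ 2)) := by
    refine hsum.mono' ?_ (Eventually.of_forall fun u => ?_)
    · exact (((continuous_abs.comp (continuous_id.add continuous_const)).pow m).mul
        (Real.continuous_exp.comp (continuous_const.mul (continuous_pow 2)))).aestronglyMeasurable
    · have h2 : |u + c| ^ m * Real.exp (-b * u ^ 2)
          ≤ (|u| + |c|) ^ m * Real.exp (-b * u ^ 2) := by
        have := pow_le_pow_left₀ (abs_nonneg (u + c)) (abs_add_le u c) m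
        exact mul_le_mul_of_nonneg_right this (Real.exp_pos _).le
      have h3 : (|u| + |c|) ^ m * Real.exp (-b * u ^ 2)
          = ∑ k ∈ Finset.range (m + 1),
              |u| ^ k * |c| ^ (m - k) * (m.choose k : ℝ) * Real.exp (-b * u ^ 2) := by
        rw [add_pow, Finset.sum_mul]
      rw [Real.norm_eq_abs, abs_of_nonneg (by positivity)]
      rw [← h3]; exact h2
  have h2 := h1.comp_sub_right c
  simpa using h2

lemma aux_cross (ρ A B : ℝ) : 0 ≤ |ρ| * A ^ 2 + |ρ| * B ^ 2 - 2 * ρ * A * B := by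
  rcases abs_cases ρ with ⟨h, _⟩ | ⟨h, _⟩ <;> rw [h] <;>
    nlinarith [sq_nonneg (A - B), sq_nonneg (A + B)]

lemma aux_pdf_nonneg {μ₁ μ₂ σ₁ σ₂ ρ : ℝ} (hσ₁ : 0 < σ₁) (hσ₂ : 0 < σ₂) (v w : ℝ) :
    0 ≤ binormalPDF μ₁ μ₂ σ₁ σ₂ ρ v w := by
  unfold binormalPDF
  have h0 : (0:ℝ) ≤ 2 * Real.pi * σ₁ * σ₂ * Real.sqrt (1 - ρ ^ 2) := by positivity
  exact mul_nonneg (by positivity) (Real.exp_pos _).le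

lemma aux_pdf_le {μ₁ μ₂ σ₁ σ₂ ρ : ℝ} (hσ₁ : 0 < σ₁) (hσ₂ : 0 < σ₂)
    (hρ : ρ ∈ Set.Ioo (-1 : ℝ) 1) (v w : ℝ) :
    binormalPDF μ₁ μ₂ σ₁ σ₂ ρ v w ≤
      (1 / (2 * Real.pi * σ₁ * σ₂ * Real.sqrt (1 - ρ ^ 2))) *
        (Real.exp (-((1 - |ρ|) / (2 * (1 - ρ ^ 2) * σ₁ ^ 2)) * (v - μ₁) ^ 2) *
          Real.exp (-((1 - |ρ|) / (2 * (1 - ρ ^ 2) * σ₂ ^ 2)) * (w - μ₂) ^ 2)) := by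
  have hρ2 : 0 < 1 - ρ ^ 2 := by nlinarith [hρ.1, hρ.2]
  unfold binormalPDF
  rw [← Real.exp_add]
  refine mul_le_mul_of_nonneg_left (Real.exp_le_exp.mpr ?_) (by positivity)
  have hc := aux_cross ρ ((v - μ₁) / σ₁) ((w - μ₂) / σ₂)
  have h1 : σ₁ ≠ 0 := hσ₁.ne'
  have h2 : σ₂ ≠ 0 := hσ₂.ne'
  have h3 : (1 - ρ ^ 2) ≠ 0 := hρ2.ne'
  have heq : (-((1 - |ρ|) / (2 * (1 - ρ ^ 2) * σ₁ ^ 2)) * (v - μ₁) ^ 2 +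
        -((1 - |ρ|) / (2 * (1 - ρ ^ 2) * σ₂ ^ 2)) * (w - μ₂) ^ 2) -
      (-(1 / (2 * (1 - ρ ^ 2))) *
        ((v - μ₁) ^ 2 / σ₁ ^ 2 - 2 * ρ * (v - μ₁) * (w - μ₂) / (σ₁ * σ₂)
          + (w - μ₂) ^ 2 / σ₂ ^ 2)) =
      (1 / (2 * (1 - ρ ^ 2))) *
        (|ρ| * ((v - μ₁) / σ₁) ^ 2 + |ρ| * ((w - μ₂) / σ₂) ^ 2
          - 2 * ρ * ((v - μ₁) / σ₁) * ((w - μ₂) / σ₂)) := by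
    field_simp
    ring
  have hk : 0 ≤ (1 / (2 * (1 - ρ ^ 2))) *
      (|ρ| * ((v - μ₁) / σ₁) ^ 2 + |ρ| * ((w - μ₂) / σ₂) ^ 2
        - 2 * ρ * ((v - μ₁) / σ₁) * ((w - μ₂) / σ₂)) :=
    mul_nonneg (by positivity) hc
  linarith [heq, hk]

lemma aux_pdf_cont {μ₁ μ₂ σ₁ σ₂ ρ : ℝ} :
    Continuous (fun p : ℝ × ℝ => binormalPDF μ₁ μ₂ σ₁ σ₂ ρ p.1 p.2) := by
  unfold binormalPDF
  fun_prop

lemma aux_tendsto_u {b : ℝ} (hb : 0 < b) :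
    Tendsto (fun u : ℝ => u * Real.exp (-b * u ^ 2)) atTop (nhds 0) := by
  have hx : Tendsto (fun x : ℝ => x * Real.exp (-x)) atTop (nhds 0) := by
    simpa using tendsto_pow_mul_exp_neg_atTop_nhds_zero 1
  have hsq : Tendsto (fun u : ℝ => b * u ^ 2) atTop atTop :=
    (tendsto_pow_atTop (two_ne_zero)).const_mul_atTop hb
  have hcomp : Tendsto (fun u : ℝ => (b * u ^ 2) * Real.exp (-(b * u ^ 2))) atTop (nhds 0) :=
    hx.comp hsq
  have hinv : Tendsto (fun u : ℝ => (b * u)⁻¹) atTop (nhds 0) :=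
    tendsto_inv_atTop_zero.comp (tendsto_id.const_mul_atTop hb)
  have hmul := hcomp.mul hinv
  rw [mul_zero] at hmul
  refine hmul.congr' ?_
  filter_upwards [eventually_gt_atTop (0 : ℝ)] with u hu
  have hbu : b * u ≠ 0 := by positivity
  field_simp

lemma aux_tendsto_exp_gauss {b : ℝ} (hb : 0 < b) (c : ℝ) :
    Tendsto (fun u : ℝ => Real.exp (-b * (u - c) ^ 2)) atTop (nhds 0) := by
  have hsq : Tendsto (fun u : ℝ => b * (u - c) ^ 2) atTop atTop :=
    ((tendsto_pow_atTop (two_ne_zero)).comp (tendsto_atTop_add_const_right atTop (-c)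
      tendsto_id)).const_mul_atTop hb |>.congr (fun u => by
        simp only [Function.comp_apply, id_eq]; ring)
  have := Real.tendsto_exp_neg_atTop_nhds_zero.comp hsq
  refine this.congr fun u => by simp [Function.comp]

lemma aux_tendsto_gauss_lin {b : ℝ} (hb : 0 < b) (c : ℝ) :
    Tendsto (fun v : ℝ => v * Real.exp (-b * (v - c) ^ 2)) atTop (nhds 0) := by
  have h1 : Tendsto (fun v : ℝ => (v - c) * Real.exp (-b * (v - c) ^ 2)) atTop (nhds 0) :=
    (aux_tendsto_u hb).comp (tendsto_atTop_add_const_right atTop (-c) tendsto_id) |>.congr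
      (fun v => by simp only [Function.comp_apply, id_eq]; ring_nf)
  have h2 := (aux_tendsto_exp_gauss hb c).const_mul c
  rw [mul_zero] at h2
  have h3 := h1.add h2
  rw [add_zero] at h3
  exact h3.congr fun v => by ring

section
variable {μ₁ μ₂ σ₁ σ₂ ρ : ℝ}

lemma aux_hb (hσ : 0 < σ₁) (hρ : ρ ∈ Set.Ioo (-1 : ℝ) 1) :
    0 < (1 - |ρ|) / (2 * (1 - ρ ^ 2) * σ₁ ^ 2) := by
  have h1 : |ρ| < 1 := abs_lt.mpr ⟨hρ.1, hρ.2⟩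
  have h2 : 0 < 1 - ρ ^ 2 := by nlinarith [hρ.1, hρ.2]
  exact div_pos (by linarith) (mul_pos (mul_pos two_pos h2) (pow_pos hσ 2))

lemma aux_int2D (hσ₁ : 0 < σ₁) (hσ₂ : 0 < σ₂) (hρ : ρ ∈ Set.Ioo (-1 : ℝ) 1) (i j : ℕ) :
    Integrable (fun p : ℝ × ℝ => p.1 ^ i * p.2 ^ j * binormalPDF μ₁ μ₂ σ₁ σ₂ ρ p.1 p.2) := by
  set N : ℝ := 1 / (2 * Real.pi * σ₁ * σ₂ * Real.sqrt (1 - ρ ^ 2)) with hN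
  set b₁ : ℝ := (1 - |ρ|) / (2 * (1 - ρ ^ 2) * σ₁ ^ 2) with hb₁
  set b₂ : ℝ := (1 - |ρ|) / (2 * (1 - ρ ^ 2) * σ₂ ^ 2) with hb₂
  have hN0 : 0 ≤ N := by rw [hN]; positivity
  have hint : Integrable (fun p : ℝ × ℝ =>
      (N * (|p.1| ^ i * Real.exp (-b₁ * (p.1 - μ₁) ^ 2))) *
        (|p.2| ^ j * Real.exp (-b₂ * (p.2 - μ₂) ^ 2))) := by
    have h := ((aux_gauss_moment (aux_hb hσ₁ hρ) i μ₁).const_mul N).mul_prod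
      (aux_gauss_moment (aux_hb hσ₂ hρ) j μ₂)
    rwa [← hb₁, ← hb₂, ← Measure.volume_eq_prod] at h
  refine hint.mono' ?_ (Eventually.of_forall fun p => ?_)
  · exact (((continuous_fst.pow i).mul (continuous_snd.pow j)).mul
      aux_pdf_cont).aestronglyMeasurable
  · have h0 := aux_pdf_nonneg (μ₁ := μ₁) (μ₂ := μ₂) (ρ := ρ) hσ₁ hσ₂ p.1 p.2
    have hle := aux_pdf_le (μ₁ := μ₁) (μ₂ := μ₂) hσ₁ hσ₂ hρ p.1 p.2
    rw [Real.norm_eq_abs, abs_mul, abs_mul, abs_pow, abs_pow, abs_of_nonneg h0]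
    calc |p.1| ^ i * |p.2| ^ j * binormalPDF μ₁ μ₂ σ₁ σ₂ ρ p.1 p.2
        ≤ |p.1| ^ i * |p.2| ^ j *
          (N * (Real.exp (-b₁ * (p.1 - μ₁) ^ 2) * Real.exp (-b₂ * (p.2 - μ₂) ^ 2))) := by
          exact mul_le_mul_of_nonneg_left hle (by positivity)
      _ = (N * (|p.1| ^ i * Real.exp (-b₁ * (p.1 - μ₁) ^ 2))) *
          (|p.2| ^ j * Real.exp (-b₂ * (p.2 - μ₂) ^ 2)) := by ring

lemma aux_int_slice1 (hσ₁ : 0 < σ₁) (hσ₂ : 0 < σ₂) (hρ : ρ ∈ Set.Ioo (-1 : ℝ) 1)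
    (i : ℕ) (w : ℝ) :
    Integrable (fun v : ℝ => v ^ i * binormalPDF μ₁ μ₂ σ₁ σ₂ ρ v w) := by
  set N : ℝ := 1 / (2 * Real.pi * σ₁ * σ₂ * Real.sqrt (1 - ρ ^ 2)) with hN
  set b₁ : ℝ := (1 - |ρ|) / (2 * (1 - ρ ^ 2) * σ₁ ^ 2) with hb₁
  set b₂ : ℝ := (1 - |ρ|) / (2 * (1 - ρ ^ 2) * σ₂ ^ 2) with hb₂
  have hN0 : 0 ≤ N := by rw [hN]; positivity
  have hint := (aux_gauss_moment (aux_hb hσ₁ hρ) i μ₁).const_mul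
    (N * Real.exp (-b₂ * (w - μ₂) ^ 2))
  refine hint.mono' ?_ (Eventually.of_forall fun v => ?_)
  · exact ((continuous_pow i).mul
      (aux_pdf_cont.comp (continuous_id.prodMk continuous_const))).aestronglyMeasurable
  · have h0 := aux_pdf_nonneg (μ₁ := μ₁) (μ₂ := μ₂) (ρ := ρ) hσ₁ hσ₂ v w
    have hle := aux_pdf_le (μ₁ := μ₁) (μ₂ := μ₂) hσ₁ hσ₂ hρ v w
    rw [Real.norm_eq_abs, abs_mul, abs_pow, abs_of_nonneg h0]
    calc |v| ^ i * binormalPDF μ₁ μ₂ σ₁ σ₂ ρ v w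
        ≤ |v| ^ i * (N * (Real.exp (-b₁ * (v - μ₁) ^ 2) * Real.exp (-b₂ * (w - μ₂) ^ 2))) :=
          mul_le_mul_of_nonneg_left hle (by positivity)
      _ = (N * Real.exp (-b₂ * (w - μ₂) ^ 2)) * (|v| ^ i * Real.exp (-b₁ * (v - μ₁) ^ 2)) := by
          ring

lemma aux_int_slice2 (hσ₁ : 0 < σ₁) (hσ₂ : 0 < σ₂) (hρ : ρ ∈ Set.Ioo (-1 : ℝ) 1)
    (j : ℕ) (v : ℝ) :
    Integrable (fun w : ℝ => w ^ j * binormalPDF μ₁ μ₂ σ₁ σ₂ ρ v w) := by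
  set N : ℝ := 1 / (2 * Real.pi * σ₁ * σ₂ * Real.sqrt (1 - ρ ^ 2)) with hN
  set b₁ : ℝ := (1 - |ρ|) / (2 * (1 - ρ ^ 2) * σ₁ ^ 2) with hb₁
  set b₂ : ℝ := (1 - |ρ|) / (2 * (1 - ρ ^ 2) * σ₂ ^ 2) with hb₂
  have hN0 : 0 ≤ N := by rw [hN]; positivity
  have hint := (aux_gauss_moment (aux_hb hσ₂ hρ) j μ₂).const_mul
    (N * Real.exp (-b₁ * (v - μ₁) ^ 2))
  refine hint.mono' ?_ (Eventually.of_forall fun w => ?_)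
  · exact ((continuous_pow j).mul
      (aux_pdf_cont.comp (continuous_const.prodMk continuous_id))).aestronglyMeasurable
  · have h0 := aux_pdf_nonneg (μ₁ := μ₁) (μ₂ := μ₂) (ρ := ρ) hσ₁ hσ₂ v w
    have hle := aux_pdf_le (μ₁ := μ₁) (μ₂ := μ₂) hσ₁ hσ₂ hρ v w
    rw [Real.norm_eq_abs, abs_mul, abs_pow, abs_of_nonneg h0]
    calc |w| ^ j * binormalPDF μ₁ μ₂ σ₁ σ₂ ρ v w
        ≤ |w| ^ j * (N * (Real.exp (-b₁ * (v - μ₁) ^ 2) * Real.exp (-b₂ * (w - μ₂) ^ 2))) :=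
          mul_le_mul_of_nonneg_left hle (by positivity)
      _ = (N * Real.exp (-b₁ * (v - μ₁) ^ 2)) * (|w| ^ j * Real.exp (-b₂ * (w - μ₂) ^ 2)) := by
          ring

-- limit of v * w * pdf as v → ∞ (w fixed)
lemma aux_tendsto_slice1 (hσ₁ : 0 < σ₁) (hσ₂ : 0 < σ₂) (hρ : ρ ∈ Set.Ioo (-1 : ℝ) 1) (w : ℝ) :
    Tendsto (fun v : ℝ => v * w * binormalPDF μ₁ μ₂ σ₁ σ₂ ρ v w) atTop (nhds 0) := by
  set N : ℝ := 1 / (2 * Real.pi * σ₁ * σ₂ * Real.sqrt (1 - ρ ^ 2)) with hN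
  set b₁ : ℝ := (1 - |ρ|) / (2 * (1 - ρ ^ 2) * σ₁ ^ 2) with hb₁
  set b₂ : ℝ := (1 - |ρ|) / (2 * (1 - ρ ^ 2) * σ₂ ^ 2) with hb₂
  have hN0 : 0 ≤ N := by rw [hN]; positivity
  set C : ℝ := N * |w| * Real.exp (-b₂ * (w - μ₂) ^ 2) with hC
  have hC0 : 0 ≤ C := by rw [hC]; positivity
  have hg : Tendsto (fun v : ℝ => C * (v * Real.exp (-b₁ * (v - μ₁) ^ 2))) atTop (nhds 0) := by
    have := (aux_tendsto_gauss_lin (aux_hb hσ₁ hρ) μ₁).const_mul C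
    rwa [mul_zero] at this
  refine squeeze_zero_norm' ?_ hg
  filter_upwards [eventually_ge_atTop (0 : ℝ)] with v hv
  have h0 := aux_pdf_nonneg (μ₁ := μ₁) (μ₂ := μ₂) (ρ := ρ) hσ₁ hσ₂ v w
  have hle := aux_pdf_le (μ₁ := μ₁) (μ₂ := μ₂) hσ₁ hσ₂ hρ v w
  rw [Real.norm_eq_abs, abs_mul, abs_mul, abs_of_nonneg hv, abs_of_nonneg h0]
  calc v * |w| * binormalPDF μ₁ μ₂ σ₁ σ₂ ρ v w
      ≤ v * |w| * (N * (Real.exp (-b₁ * (v - μ₁) ^ 2) * Real.exp (-b₂ * (w - μ₂) ^ 2))) :=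
        mul_le_mul_of_nonneg_left hle (by positivity)
    _ = C * (v * Real.exp (-b₁ * (v - μ₁) ^ 2)) := by rw [hC]; ring

lemma aux_tendsto_slice2 (hσ₁ : 0 < σ₁) (hσ₂ : 0 < σ₂) (hρ : ρ ∈ Set.Ioo (-1 : ℝ) 1) (v : ℝ) :
    Tendsto (fun w : ℝ => v * w * binormalPDF μ₁ μ₂ σ₁ σ₂ ρ v w) atTop (nhds 0) := by
  set N : ℝ := 1 / (2 * Real.pi * σ₁ * σ₂ * Real.sqrt (1 - ρ ^ 2)) with hN
  set b₁ : ℝ := (1 - |ρ|) / (2 * (1 - ρ ^ 2) * σ₁ ^ 2) with hb₁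
  set b₂ : ℝ := (1 - |ρ|) / (2 * (1 - ρ ^ 2) * σ₂ ^ 2) with hb₂
  have hN0 : 0 ≤ N := by rw [hN]; positivity
  set C : ℝ := N * |v| * Real.exp (-b₁ * (v - μ₁) ^ 2) with hC
  have hC0 : 0 ≤ C := by rw [hC]; positivity
  have hg : Tendsto (fun w : ℝ => C * (w * Real.exp (-b₂ * (w - μ₂) ^ 2))) atTop (nhds 0) := by
    have := (aux_tendsto_gauss_lin (aux_hb hσ₂ hρ) μ₂).const_mul C
    rwa [mul_zero] at this
  refine squeeze_zero_norm' ?_ hg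
  filter_upwards [eventually_ge_atTop (0 : ℝ)] with w hw
  have h0 := aux_pdf_nonneg (μ₁ := μ₁) (μ₂ := μ₂) (ρ := ρ) hσ₁ hσ₂ v w
  have hle := aux_pdf_le (μ₁ := μ₁) (μ₂ := μ₂) hσ₁ hσ₂ hρ v w
  rw [Real.norm_eq_abs, abs_mul, abs_mul, abs_of_nonneg hw, abs_of_nonneg h0]
  calc |v| * w * binormalPDF μ₁ μ₂ σ₁ σ₂ ρ v w
      ≤ |v| * w * (N * (Real.exp (-b₁ * (v - μ₁) ^ 2) * Real.exp (-b₂ * (w - μ₂) ^ 2))) :=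
        mul_le_mul_of_nonneg_left hle (by positivity)
    _ = C * (w * Real.exp (-b₂ * (w - μ₂) ^ 2)) := by rw [hC]; ring

end

noncomputable def auxD1 (μ₁ μ₂ σ₁ σ₂ ρ v w : ℝ) : ℝ :=
  (w + v * w * (-(1 / (2 * (1 - ρ ^ 2))) *
      (2 * (v - μ₁) / σ₁ ^ 2 - 2 * ρ * (w - μ₂) / (σ₁ * σ₂)))) *
    binormalPDF μ₁ μ₂ σ₁ σ₂ ρ v w

noncomputable def auxD2 (μ₁ μ₂ σ₁ σ₂ ρ v w : ℝ) : ℝ :=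
  (v + v * w * (-(1 / (2 * (1 - ρ ^ 2))) *
      (2 * (w - μ₂) / σ₂ ^ 2 - 2 * ρ * (v - μ₁) / (σ₁ * σ₂)))) *
    binormalPDF μ₁ μ₂ σ₁ σ₂ ρ v w

lemma aux_hasDerivAt1 (μ₁ μ₂ σ₁ σ₂ ρ w v : ℝ) :
    HasDerivAt (fun v => v * w * binormalPDF μ₁ μ₂ σ₁ σ₂ ρ v w)
      (auxD1 μ₁ μ₂ σ₁ σ₂ ρ v w) v := by
  have hq1 : HasDerivAt (fun v : ℝ => (v - μ₁) ^ 2 / σ₁ ^ 2) (2 * (v - μ₁) / σ₁ ^ 2) v := by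
    have := (((hasDerivAt_id v).sub_const μ₁).pow 2).div_const (σ₁ ^ 2)
    simpa using this
  have hq2 : HasDerivAt (fun v : ℝ => 2 * ρ * (v - μ₁) * (w - μ₂) / (σ₁ * σ₂))
      (2 * ρ * (w - μ₂) / (σ₁ * σ₂)) v := by
    have h := (((hasDerivAt_id v).sub_const μ₁).const_mul (2 * ρ)).mul_const (w - μ₂)
    have h2 := h.div_const (σ₁ * σ₂)
    simpa using h2
  have hq3 : HasDerivAt (fun _ : ℝ => (w - μ₂) ^ 2 / σ₂ ^ 2) 0 v := hasDerivAt_const _ _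
  have hq := (hq1.sub hq2).add hq3
  have he := hq.const_mul (-(1 / (2 * (1 - ρ ^ 2))))
  have hexp := he.exp
  have hN := hexp.const_mul (1 / (2 * Real.pi * σ₁ * σ₂ * Real.sqrt (1 - ρ ^ 2)))
  have hvw := (hasDerivAt_id' (x := v)).mul_const w
  have h := hvw.mul hN
  refine (h.congr_deriv ?_)
  unfold auxD1 binormalPDF
  simp only [Pi.add_apply, Pi.sub_apply]
  ring

lemma aux_hasDerivAt2 (μ₁ μ₂ σ₁ σ₂ ρ v w : ℝ) :
    HasDerivAt (fun w => v * w * binormalPDF μ₁ μ₂ σ₁ σ₂ ρ v w)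
      (auxD2 μ₁ μ₂ σ₁ σ₂ ρ v w) w := by
  have hq1 : HasDerivAt (fun _ : ℝ => (v - μ₁) ^ 2 / σ₁ ^ 2) 0 w := hasDerivAt_const _ _
  have hq2 : HasDerivAt (fun w : ℝ => 2 * ρ * (v - μ₁) * (w - μ₂) / (σ₁ * σ₂))
      (2 * ρ * (v - μ₁) / (σ₁ * σ₂)) w := by
    have h := (((hasDerivAt_id w).sub_const μ₂).const_mul (2 * ρ * (v - μ₁))).div_const (σ₁ * σ₂)
    simpa using h
  have hq3 : HasDerivAt (fun w : ℝ => (w - μ₂) ^ 2 / σ₂ ^ 2) (2 * (w - μ₂) / σ₂ ^ 2) w := by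
    have := (((hasDerivAt_id w).sub_const μ₂).pow 2).div_const (σ₂ ^ 2)
    simpa using this
  have hq := (hq1.sub hq2).add hq3
  have he := hq.const_mul (-(1 / (2 * (1 - ρ ^ 2))))
  have hexp := he.exp
  have hN := hexp.const_mul (1 / (2 * Real.pi * σ₁ * σ₂ * Real.sqrt (1 - ρ ^ 2)))
  have hvw := (hasDerivAt_id' (x := w)).const_mul v
  have h := hvw.mul hN
  refine (h.congr_deriv ?_)
  unfold auxD2 binormalPDF
  simp only [Pi.add_apply, Pi.sub_apply]
  ring

section
variable {μ₁ μ₂ σ₁ σ₂ ρ : ℝ}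

lemma aux_intD1_slice (hσ₁ : 0 < σ₁) (hσ₂ : 0 < σ₂) (hρ : ρ ∈ Set.Ioo (-1 : ℝ) 1) (w : ℝ) :
    Integrable (fun v : ℝ => auxD1 μ₁ μ₂ σ₁ σ₂ ρ v w) := by
  have h0 := (aux_int_slice1 (μ₁ := μ₁) (μ₂ := μ₂) hσ₁ hσ₂ hρ 0 w).const_mul w
  have h1 := (aux_int_slice1 (μ₁ := μ₁) (μ₂ := μ₂) hσ₁ hσ₂ hρ 1 w).const_mul
    (w * (-(1 / (2 * (1 - ρ ^ 2))) * (-2 * μ₁ / σ₁ ^ 2 - 2 * ρ * (w - μ₂) / (σ₁ * σ₂))))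
  have h2 := (aux_int_slice1 (μ₁ := μ₁) (μ₂ := μ₂) hσ₁ hσ₂ hρ 2 w).const_mul
    (w * (-(1 / (2 * (1 - ρ ^ 2))) * (2 / σ₁ ^ 2)))
  refine ((h0.add h1).add h2).congr (Eventually.of_forall fun v => ?_)
  simp only [Pi.add_apply]
  unfold auxD1
  ring

lemma aux_intD2_slice (hσ₁ : 0 < σ₁) (hσ₂ : 0 < σ₂) (hρ : ρ ∈ Set.Ioo (-1 : ℝ) 1) (v : ℝ) :
    Integrable (fun w : ℝ => auxD2 μ₁ μ₂ σ₁ σ₂ ρ v w) := by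
  have h0 := (aux_int_slice2 (μ₁ := μ₁) (μ₂ := μ₂) hσ₁ hσ₂ hρ 0 v).const_mul v
  have h1 := (aux_int_slice2 (μ₁ := μ₁) (μ₂ := μ₂) hσ₁ hσ₂ hρ 1 v).const_mul
    (v * (-(1 / (2 * (1 - ρ ^ 2))) * (-2 * μ₂ / σ₂ ^ 2 - 2 * ρ * (v - μ₁) / (σ₁ * σ₂))))
  have h2 := (aux_int_slice2 (μ₁ := μ₁) (μ₂ := μ₂) hσ₁ hσ₂ hρ 2 v).const_mul
    (v * (-(1 / (2 * (1 - ρ ^ 2))) * (2 / σ₂ ^ 2)))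
  refine ((h0.add h1).add h2).congr (Eventually.of_forall fun w => ?_)
  simp only [Pi.add_apply]
  unfold auxD2
  ring

lemma aux_inner1 (hσ₁ : 0 < σ₁) (hσ₂ : 0 < σ₂) (hρ : ρ ∈ Set.Ioo (-1 : ℝ) 1) (w : ℝ) :
    ∫ v in Ioi (0 : ℝ), auxD1 μ₁ μ₂ σ₁ σ₂ ρ v w = 0 := by
  have h := integral_Ioi_of_hasDerivAt_of_tendsto' (a := (0:ℝ))
    (f := fun v => v * w * binormalPDF μ₁ μ₂ σ₁ σ₂ ρ v w)
    (fun x _ => aux_hasDerivAt1 μ₁ μ₂ σ₁ σ₂ ρ w x)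
    ((aux_intD1_slice hσ₁ hσ₂ hρ w).integrableOn)
    (aux_tendsto_slice1 hσ₁ hσ₂ hρ w)
  simpa using h

lemma aux_inner2 (hσ₁ : 0 < σ₁) (hσ₂ : 0 < σ₂) (hρ : ρ ∈ Set.Ioo (-1 : ℝ) 1) (v : ℝ) :
    ∫ w in Ioi (0 : ℝ), auxD2 μ₁ μ₂ σ₁ σ₂ ρ v w = 0 := by
  have h := integral_Ioi_of_hasDerivAt_of_tendsto' (a := (0:ℝ))
    (f := fun w => v * w * binormalPDF μ₁ μ₂ σ₁ σ₂ ρ v w)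
    (fun x _ => aux_hasDerivAt2 μ₁ μ₂ σ₁ σ₂ ρ v x)
    ((aux_intD2_slice hσ₁ hσ₂ hρ v).integrableOn)
    (aux_tendsto_slice2 hσ₁ hσ₂ hρ v)
  simpa using h

lemma aux_intD1 (hσ₁ : 0 < σ₁) (hσ₂ : 0 < σ₂) (hρ : ρ ∈ Set.Ioo (-1 : ℝ) 1) :
    Integrable (fun p : ℝ × ℝ => auxD1 μ₁ μ₂ σ₁ σ₂ ρ p.1 p.2) := by
  have h01 := aux_int2D (μ₁ := μ₁) (μ₂ := μ₂) hσ₁ hσ₂ hρ 0 1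
  have h21 := (aux_int2D (μ₁ := μ₁) (μ₂ := μ₂) hσ₁ hσ₂ hρ 2 1).const_mul
    (-(1 / (2 * (1 - ρ ^ 2))) * (2 / σ₁ ^ 2))
  have h11 := (aux_int2D (μ₁ := μ₁) (μ₂ := μ₂) hσ₁ hσ₂ hρ 1 1).const_mul
    (-(1 / (2 * (1 - ρ ^ 2))) * (-2 * μ₁ / σ₁ ^ 2 + 2 * ρ * μ₂ / (σ₁ * σ₂)))
  have h12 := (aux_int2D (μ₁ := μ₁) (μ₂ := μ₂) hσ₁ hσ₂ hρ 1 2).const_mul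
    (-(1 / (2 * (1 - ρ ^ 2))) * (-2 * ρ / (σ₁ * σ₂)))
  refine (((h01.add h21).add h11).add h12).congr (Eventually.of_forall fun p => ?_)
  simp only [Pi.add_apply]
  unfold auxD1
  ring

lemma aux_intD2 (hσ₁ : 0 < σ₁) (hσ₂ : 0 < σ₂) (hρ : ρ ∈ Set.Ioo (-1 : ℝ) 1) :
    Integrable (fun p : ℝ × ℝ => auxD2 μ₁ μ₂ σ₁ σ₂ ρ p.1 p.2) := by
  have h01 := aux_int2D (μ₁ := μ₁) (μ₂ := μ₂) hσ₁ hσ₂ hρ 1 0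
  have h21 := (aux_int2D (μ₁ := μ₁) (μ₂ := μ₂) hσ₁ hσ₂ hρ 1 2).const_mul
    (-(1 / (2 * (1 - ρ ^ 2))) * (2 / σ₂ ^ 2))
  have h11 := (aux_int2D (μ₁ := μ₁) (μ₂ := μ₂) hσ₁ hσ₂ hρ 1 1).const_mul
    (-(1 / (2 * (1 - ρ ^ 2))) * (-2 * μ₂ / σ₂ ^ 2 + 2 * ρ * μ₁ / (σ₁ * σ₂)))
  have h12 := (aux_int2D (μ₁ := μ₁) (μ₂ := μ₂) hσ₁ hσ₂ hρ 2 1).const_mul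
    (-(1 / (2 * (1 - ρ ^ 2))) * (-2 * ρ / (σ₁ * σ₂)))
  refine (((h01.add h21).add h11).add h12).congr (Eventually.of_forall fun p => ?_)
  simp only [Pi.add_apply]
  unfold auxD2
  ring

lemma aux_quad1 (hσ₁ : 0 < σ₁) (hσ₂ : 0 < σ₂) (hρ : ρ ∈ Set.Ioo (-1 : ℝ) 1) :
    ∫ p in Ioi (0 : ℝ) ×ˢ Ioi (0 : ℝ), auxD1 μ₁ μ₂ σ₁ σ₂ ρ p.1 p.2 = 0 := by
  have hint : Integrable (fun p : ℝ × ℝ => auxD1 μ₁ μ₂ σ₁ σ₂ ρ p.1 p.2)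
      ((volume.restrict (Ioi (0:ℝ))).prod (volume.restrict (Ioi (0:ℝ)))) := by
    rw [Measure.prod_restrict, ← Measure.volume_eq_prod]
    exact (aux_intD1 hσ₁ hσ₂ hρ).integrableOn
  calc ∫ p in Ioi (0 : ℝ) ×ˢ Ioi (0 : ℝ), auxD1 μ₁ μ₂ σ₁ σ₂ ρ p.1 p.2
      = ∫ p, auxD1 μ₁ μ₂ σ₁ σ₂ ρ p.1 p.2
          ∂((volume.restrict (Ioi (0:ℝ))).prod (volume.restrict (Ioi (0:ℝ)))) := by
        rw [Measure.prod_restrict, ← Measure.volume_eq_prod]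
    _ = ∫ w in Ioi (0:ℝ), ∫ v in Ioi (0:ℝ), auxD1 μ₁ μ₂ σ₁ σ₂ ρ v w := by
        exact integral_prod_symm _ hint
    _ = 0 := by
        rw [show (fun w => ∫ v in Ioi (0:ℝ), auxD1 μ₁ μ₂ σ₁ σ₂ ρ v w) = fun _ => (0:ℝ) from
          funext fun w => aux_inner1 hσ₁ hσ₂ hρ w]
        simp

lemma aux_quad2 (hσ₁ : 0 < σ₁) (hσ₂ : 0 < σ₂) (hρ : ρ ∈ Set.Ioo (-1 : ℝ) 1) :
    ∫ p in Ioi (0 : ℝ) ×ˢ Ioi (0 : ℝ), auxD2 μ₁ μ₂ σ₁ σ₂ ρ p.1 p.2 = 0 := by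
  have hint : Integrable (fun p : ℝ × ℝ => auxD2 μ₁ μ₂ σ₁ σ₂ ρ p.1 p.2)
      ((volume.restrict (Ioi (0:ℝ))).prod (volume.restrict (Ioi (0:ℝ)))) := by
    rw [Measure.prod_restrict, ← Measure.volume_eq_prod]
    exact (aux_intD2 hσ₁ hσ₂ hρ).integrableOn
  calc ∫ p in Ioi (0 : ℝ) ×ˢ Ioi (0 : ℝ), auxD2 μ₁ μ₂ σ₁ σ₂ ρ p.1 p.2
      = ∫ p, auxD2 μ₁ μ₂ σ₁ σ₂ ρ p.1 p.2
          ∂((volume.restrict (Ioi (0:ℝ))).prod (volume.restrict (Ioi (0:ℝ)))) := by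
        rw [Measure.prod_restrict, ← Measure.volume_eq_prod]
    _ = ∫ v in Ioi (0:ℝ), ∫ w in Ioi (0:ℝ), auxD2 μ₁ μ₂ σ₁ σ₂ ρ v w := by
        exact integral_prod _ hint
    _ = 0 := by
        rw [show (fun v => ∫ w in Ioi (0:ℝ), auxD2 μ₁ μ₂ σ₁ σ₂ ρ v w) = fun _ => (0:ℝ) from
          funext fun v => aux_inner2 hσ₁ hσ₂ hρ v]
        simp

end

end TobitAux

/-- Moment condition (Estm-sl) for the panel Tobit model with a fixed effect in the slopes:
with `(U_t, U_s)` bivariate normal with means `x_t'β + z_t α`, `x_s'β + z_s α`, standard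
deviations `σ_t, σ_s`, and correlation `ρ` (covariance `σ_{t,s} = ρσ_tσ_s`), `z_t, z_s > 0`,
`E[(U_t²z_s²U_s z_t − U_s²z_t²U_t z_s − U_t z_s U_s z_t (x_t z_s − x_s z_t)'β
   + U_t z_s (z_t²σ_s² − z_t z_s σ_{t,s}) − U_s z_t (z_s²σ_t² − z_t z_s σ_{t,s}))·1{U_t>0,U_s>0}] = 0`. -/
theorem panel_tobit_slope_effect_moment (n : ℕ) (hn : 1 ≤ n) (xt xs β : Fin n → ℝ) (α : ℝ)
    (zt zs : ℝ) (hzt : 0 < zt) (hzs : 0 < zs)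
    (σt σs ρ : ℝ) (hσt : 0 < σt) (hσs : 0 < σs) (hρ : ρ ∈ Set.Ioo (-1 : ℝ) 1)
    (σts : ℝ) (hσts : σts = ρ * σt * σs) :
    ∫ p in Set.Ioi (0 : ℝ) ×ˢ Set.Ioi (0 : ℝ),
        (p.1 ^ 2 * zs ^ 2 * (p.2 * zt) - p.2 ^ 2 * zt ^ 2 * (p.1 * zs)
            - (p.1 * zs) * (p.2 * zt) * (∑ i, (xt i * zs - xs i * zt) * β i)
            + (p.1 * zs) * (zt ^ 2 * σs ^ 2 - zt * zs * σts)
            - (p.2 * zt) * (zs ^ 2 * σt ^ 2 - zt * zs * σts))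
          * binormalPDF (∑ i, xt i * β i + zt * α) (∑ i, xs i * β i + zs * α)
              σt σs ρ p.1 p.2 = 0 := by
  have hρ2 : (0:ℝ) < 1 - ρ ^ 2 := by nlinarith [hρ.1, hρ.2]
  rw [hσts]
  set m1 : ℝ := ∑ i, xt i * β i + zt * α with hm1
  set m2 : ℝ := ∑ i, xs i * β i + zs * α with hm2
  have hsum : (∑ i, (xt i * zs - xs i * zt) * β i) = zs * m1 - zt * m2 := by
    rw [hm1, hm2]
    have h : ∀ i ∈ Finset.univ, (xt i * zs - xs i * zt) * β i
        = zs * (xt i * β i) - zt * (xs i * β i) := fun i _ => by ring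
    rw [Finset.sum_congr rfl h, Finset.sum_sub_distrib, ← Finset.mul_sum, ← Finset.mul_sum]
    ring
  rw [hsum]
  have key : ∫ p in Set.Ioi (0:ℝ) ×ˢ Set.Ioi (0:ℝ),
      ((zs * zt * (zt * (ρ * σt * σs) - zs * σt ^ 2)) * auxD1 m1 m2 σt σs ρ p.1 p.2
        + (zs * zt * (zt * σs ^ 2 - zs * (ρ * σt * σs))) * auxD2 m1 m2 σt σs ρ p.1 p.2)
      = 0 := by
    rw [integral_add
      (((aux_intD1 hσt hσs hρ).integrableOn).const_mul _)
      (((aux_intD2 hσt hσs hρ).integrableOn).const_mul _),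
      integral_const_mul, integral_const_mul,
      aux_quad1 hσt hσs hρ, aux_quad2 hσt hσs hρ]
    ring
  refine Eq.trans (setIntegral_congr_fun (measurableSet_Ioi.prod measurableSet_Ioi)
    fun p _ => ?_) key
  have h1 : σt ≠ 0 := hσt.ne'
  have h2 : σs ≠ 0 := hσs.ne'
  have h3 : (1 - ρ ^ 2) ≠ 0 := hρ2.ne'
  have h4 : Real.sqrt (1 - ρ ^ 2) ≠ 0 := (Real.sqrt_pos.mpr hρ2).ne'
  have h5 : Real.pi ≠ 0 := Real.pi_ne_zero
  unfold auxD1 auxD2 binormalPDF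
  field_simp
  ring
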